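/- A map f : Fin n → Fin n is an almost-permutation (exactly n-1 periodic points) if and only if f is not a bijection and there exists a subset S of Fin n of size n-1 such that f maps S bijectively onto S. -/

import Mathlib

open Function Set

private lemma iter_mapsTo {α : Type*} {f : α → α} {S : Set α} (h : MapsTo f S S) :
    ∀ k, MapsTo f^[k] S S := by
  intro k
  induction k with
  | zero => intro a ha; simpa using ha
  | succ k ih => rw [Function.iterate_succ']; exact h.comp ih

private lemma iter_injOn {α : Type*} {f : α → α} {S : Set α} (h : Set.InjOn f S)
    (hm : MapsTo f S S) : ∀ k, Set.InjOn f^[k] S := by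
  intro k
  induction k with
  | zero => simpa using Set.injOn_id S
  | succ k ih =>
    rw [Function.iterate_succ']
    exact h.comp ih (iter_mapsTo hm k)

private lemma mem_periodic_of_bijOn {α : Type*} [Finite α] {f : α → α} {S : Set α}
    (h : Set.BijOn f S S) {x : α} (hx : x ∈ S) : x ∈ periodicPts f := by
  have hm := h.mapsTo
  have : ¬ Function.Injective (fun k : ℕ => (⟨f^[k] x, iter_mapsTo hm k hx⟩ : S)) := by
    intro hinj
    haveI : Infinite S := Infinite.of_injective _ hinj
    exact not_finite S
  rw [Function.not_injective_iff] at this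
  obtain ⟨i, j, hij, hne⟩ := this
  simp only [Subtype.mk.injEq] at hij
  wlog hlt : i < j generalizing i j
  · exact this j i (Ne.symm hne) hij.symm (by omega)
  refine mk_mem_periodicPts (n := j - i) (by omega) ?_
  have : f^[i] (f^[j-i] x) = f^[i] x := by
    rw [← Function.iterate_add_apply]
    rw [(by omega : i + (j - i) = j)] at *
    exact hij.symm
  exact iter_injOn h.injOn hm i (iter_mapsTo hm (j - i) hx) hx this

private lemma bij_iff_univ {α : Type*} [Finite α] {f : α → α} :
    Function.Bijective f ↔ periodicPts f = Set.univ := by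
  constructor
  · intro h
    refine Set.eq_univ_of_forall fun x => ?_
    exact mem_periodic_of_bijOn ((Set.bijOn_univ).mpr h) (Set.mem_univ x)
  · intro h
    have := Function.bijOn_periodicPts (f := f)
    rw [h] at this
    exact Set.bijOn_univ.mp this

theorem stmt_1 (n : ℕ) (hn : 1 ≤ n) (f : Fin n → Fin n) :
    Nat.card (Function.periodicPts f) = n - 1 ↔
      ¬ Function.Bijective f ∧
        ∃ S : Finset (Fin n), S.card = n - 1 ∧ Set.BijOn f S S := by
  have hcard : Nat.card (Function.periodicPts f) = (periodicPts f).ncard :=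
    (Nat.card_coe_set_eq _)
  constructor
  · intro h
    rw [hcard] at h
    constructor
    · intro hb
      rw [bij_iff_univ.mp hb, Set.ncard_univ] at h
      simp at h
      omega
    · refine ⟨(Set.toFinite (periodicPts f)).toFinset, ?_, ?_⟩
      · rw [← h, Set.ncard_eq_toFinset_card]
      · simpa [Set.Finite.coe_toFinset] using Function.bijOn_periodicPts (f := f)
  · rintro ⟨hb, S, hS, hbij⟩
    rw [hcard]
    have hsub : (S : Set (Fin n)) ⊆ periodicPts f := fun x hx =>
      mem_periodic_of_bijOn hbij hx
    have h1 : n - 1 ≤ (periodicPts f).ncard := by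
      calc n - 1 = (S : Set (Fin n)).ncard := by rw [Set.ncard_coe_finset, hS]
      _ ≤ _ := Set.ncard_le_ncard hsub (Set.toFinite _)
    have h2 : (periodicPts f).ncard ≤ n := by
      have := Set.ncard_le_ncard (Set.subset_univ (periodicPts f)) (Set.toFinite _)
      rwa [Set.ncard_univ, Nat.card_eq_fintype_card, Fintype.card_fin] at this
    have h3 : (periodicPts f).ncard ≠ n := by
      intro hne
      apply hb
      rw [bij_iff_univ]
      apply Set.eq_of_subset_of_ncard_le (Set.subset_univ _) _ (Set.toFinite _)
      rw [Set.ncard_univ, Nat.card_eq_fintype_card, Fintype.card_fin]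
      exact hne.ge
    omega
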